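/- For every positive integer k, M_2(k+2, k) = k + k(k−1)/2 + ⌊(k−1)/3⌋·⌊k/3⌋·⌊(k+1)/3⌋. -/

import Mathlib

open Finset

/-- The support of a vector `x ∈ F_2^n`: the set of nonzero coordinates. -/
def supp {n : ℕ} (x : Fin n → ZMod 2) : Set (Fin n) := {i | x i ≠ 0}

/-- `c` is a minimal codeword of the linear code (subspace) `C ≤ F_2^n`:
it is a nonzero codeword and no nonzero codeword has support properly contained in `supp c`. -/
def IsMinimal {n : ℕ} (C : Submodule (ZMod 2) (Fin n → ZMod 2)) (c : Fin n → ZMod 2) : Prop :=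
  c ∈ C ∧ c ≠ 0 ∧ ∀ c' ∈ C, c' ≠ 0 → ¬ supp c' ⊂ supp c

/-- `M(C)`: the number of minimal codewords of `C`. -/
noncomputable def Mcode {n : ℕ} (C : Submodule (ZMod 2) (Fin n → ZMod 2)) : ℕ :=
  Set.ncard {c | IsMinimal C c}

/-- The `i`-th row `g^i` of the systematic generator matrix `G = [I_k | A]`. -/
def row {k t : ℕ} (A : Fin k → Fin t → ZMod 2) (i : Fin k) : Fin (k + t) → ZMod 2 :=
  Fin.append (Pi.single i 1) (A i)

/-- The binary linear `[k+t, k]` code with systematic generator matrix `G = [I_k | A]`. -/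
def genCode {k t : ℕ} (A : Fin k → Fin t → ZMod 2) :
    Submodule (ZMod 2) (Fin (k + t) → ZMod 2) :=
  Submodule.span (ZMod 2) (Set.range (row A))

/-- `c^S = ∑_{i ∈ S} g^i`. -/
def cS {k t : ℕ} (A : Fin k → Fin t → ZMod 2) (S : Finset (Fin k)) : Fin (k + t) → ZMod 2 :=
  ∑ i ∈ S, row A i

/-- `c_I`: the restriction of a codeword to its last `t` coordinates (the information bits). -/
def infoBits {k t : ℕ} (c : Fin (k + t) → ZMod 2) : Fin t → ZMod 2 :=
  fun j => c (Fin.natAdd k j)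

/-- `a_τ(A)` : the number of indices `i` with `g^i_I = A i = τ`. -/
def aCount {k t : ℕ} (A : Fin k → Fin t → ZMod 2) (τ : Fin t → ZMod 2) : ℕ :=
  (Finset.univ.filter fun i => A i = τ).card

/-- `M_2(n, k)`: the maximum of `M(C)` over all binary linear `[n, k]` codes `C`. -/
noncomputable def M2 (n k : ℕ) : ℕ :=
  sSup {m | ∃ C : Submodule (ZMod 2) (Fin n → ZMod 2),
    Module.finrank (ZMod 2) C = k ∧ Mcode C = m}


abbrev W := ZMod 2 × ZMod 2
lemma W_cases : ∀ x : W, x = 0 ∨ x = (1,0) ∨ x = (0,1) ∨ x = (1,1) := by decide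
lemma W_add_self : ∀ x : W, x + x = 0 := by decide
lemma W_add_ne_zero : ∀ x y : W, x ≠ y → x + y ≠ 0 := by decide
lemma W_three : ∀ x y z : W, x ≠ 0 → y ≠ 0 → z ≠ 0 → x ≠ y → x ≠ z → y ≠ z → x + y + z = 0 := by decide
lemma zmod2_cases : ∀ a : ZMod 2, a = 0 ∨ a = 1 := by decide
lemma zmod2_ne_zero {a : ZMod 2} (h : a ≠ 0) : a = 1 := by revert h; revert a; decide

def suppF {n : ℕ} (x : Fin n → ZMod 2) : Finset (Fin n) := univ.filter (fun i => x i ≠ 0)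

def ind {n : ℕ} (S : Finset (Fin n)) : Fin n → ZMod 2 := fun i => if i ∈ S then 1 else 0

lemma suppF_ind {n : ℕ} (S : Finset (Fin n)) : suppF (ind S) = S := by
  ext i; simp only [suppF, ind, mem_filter, mem_univ, true_and]
  by_cases h : i ∈ S <;> simp [h]

lemma ind_suppF {n : ℕ} (x : Fin n → ZMod 2) : ind (suppF x) = x := by
  funext i; simp only [suppF, ind, mem_filter, mem_univ, true_and]
  rcases zmod2_cases (x i) with h | h <;> simp [h]

lemma ind_inj {n : ℕ} : Function.Injective (ind (n := n)) := by
  intro S T h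
  rw [← suppF_ind S, h, suppF_ind]

lemma supp_eq_coe {n : ℕ} (x : Fin n → ZMod 2) : supp x = ↑(suppF x) := by
  ext i; simp [supp, suppF]

lemma ind_ne_zero {n : ℕ} {S : Finset (Fin n)} (h : S.Nonempty) : ind S ≠ 0 := by
  obtain ⟨i, hi⟩ := h
  intro hz
  have := congrFun hz i
  simp [ind, hi] at this

lemma suppF_nonempty {n : ℕ} {x : Fin n → ZMod 2} (h : x ≠ 0) : (suppF x).Nonempty := by
  by_contra hne
  apply h
  rw [← ind_suppF x, Finset.not_nonempty_iff_eq_empty.mp hne]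
  funext i; simp [ind]

def φv {n : ℕ} (v : Fin n → W) : (Fin n → ZMod 2) →ₗ[ZMod 2] W where
  toFun := fun x => ∑ i, x i • v i
  map_add' := by intro x y; simp [add_smul, Finset.sum_add_distrib]
  map_smul' := by intro c x; simp [smul_smul, Finset.smul_sum]

lemma φv_apply {n : ℕ} (v : Fin n → W) (x : Fin n → ZMod 2) :
    φv v x = ∑ i ∈ suppF x, v i := by
  show ∑ i, x i • v i = _
  calc ∑ i, x i • v i = ∑ i ∈ univ.filter (fun i => x i ≠ 0), x i • v i := by
        refine (Finset.sum_filter_of_ne ?_).symm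
        intro i _ hne hzero
        simp [hzero] at hne
    _ = ∑ i ∈ univ.filter (fun i => x i ≠ 0), v i := by
        refine Finset.sum_congr rfl (fun i hi => ?_)
        simp only [mem_filter] at hi
        rw [zmod2_ne_zero hi.2, one_smul]

lemma ssubset_pair {α : Type*} [DecidableEq α] {i j : α} {T : Finset α}
    (h : T ⊂ {i, j}) (hT : T.Nonempty) : T = {i} ∨ T = {j} := by
  have hsub : ∀ x ∈ T, x = i ∨ x = j := by
    intro x hx; have := h.1 hx; simpa using this
  by_cases hi : i ∈ T <;> by_cases hj : j ∈ T
  · exfalso; exact h.2 (by intro x hx; simp at hx; rcases hx with rfl | rfl <;> assumption)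
  · left; ext x; simp only [mem_singleton]
    exact ⟨fun hx => (hsub x hx).resolve_right (fun e => hj (e ▸ hx)), fun e => e ▸ hi⟩
  · right; ext x; simp only [mem_singleton]
    exact ⟨fun hx => (hsub x hx).resolve_left (fun e => hi (e ▸ hx)), fun e => e ▸ hj⟩
  · exfalso; obtain ⟨x, hx⟩ := hT
    rcases hsub x hx with rfl | rfl <;> [exact hi hx; exact hj hx]

lemma ssubset_triple {α : Type*} [DecidableEq α] {i j l : α} {T : Finset α}
    (h : T ⊂ {i, j, l}) (hT : T.Nonempty) :
    T = {i} ∨ T = {j} ∨ T = {l} ∨ T = {i,j} ∨ T = {i,l} ∨ T = {j,l} := by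
  have hsub : ∀ x ∈ T, x = i ∨ x = j ∨ x = l := by
    intro x hx; have := h.1 hx; simpa using this
  by_cases hi : i ∈ T <;> by_cases hj : j ∈ T <;> by_cases hl : l ∈ T
  · exfalso; exact h.2 (by intro x hx; simp at hx; rcases hx with rfl | rfl | rfl <;> assumption)
  · refine Or.inr (Or.inr (Or.inr (Or.inl ?_)))
    ext x; simp only [mem_insert, mem_singleton]
    constructor
    · intro hx; rcases hsub x hx with rfl | rfl | rfl <;> tauto
    · rintro (rfl | rfl) <;> assumption
  · refine Or.inr (Or.inr (Or.inr (Or.inr (Or.inl ?_))))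
    ext x; simp only [mem_insert, mem_singleton]
    constructor
    · intro hx; rcases hsub x hx with rfl | rfl | rfl <;> tauto
    · rintro (rfl | rfl) <;> assumption
  · refine Or.inl ?_
    ext x; simp only [mem_singleton]
    constructor
    · intro hx; rcases hsub x hx with rfl | rfl | rfl <;> tauto
    · rintro rfl; assumption
  · refine Or.inr (Or.inr (Or.inr (Or.inr (Or.inr ?_))))
    ext x; simp only [mem_insert, mem_singleton]
    constructor
    · intro hx; rcases hsub x hx with rfl | rfl | rfl <;> tauto
    · rintro (rfl | rfl) <;> assumption
  · refine Or.inr (Or.inl ?_)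
    ext x; simp only [mem_singleton]
    constructor
    · intro hx; rcases hsub x hx with rfl | rfl | rfl <;> tauto
    · rintro rfl; assumption
  · refine Or.inr (Or.inr (Or.inl ?_))
    ext x; simp only [mem_singleton]
    constructor
    · intro hx; rcases hsub x hx with rfl | rfl | rfl <;> tauto
    · rintro rfl; assumption
  · exfalso; obtain ⟨x, hx⟩ := hT
    rcases hsub x hx with rfl | rfl | rfl <;> [exact hi hx; exact hj hx; exact hl hx]
def Good {n : ℕ} (v : Fin n → W) (S : Finset (Fin n)) : Prop :=
  S.Nonempty ∧ (∑ i ∈ S, v i) = 0 ∧ ∀ T : Finset (Fin n), T.Nonempty → (∑ i ∈ T, v i) = 0 → ¬ T ⊂ S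

lemma minimal_eq_image {n : ℕ} (v : Fin n → W) :
    {c | IsMinimal (LinearMap.ker (φv v)) c} = ind '' {S | Good v S} := by
  ext c
  constructor
  · rintro ⟨hc, hne, hmin⟩
    refine ⟨suppF c, ⟨suppF_nonempty hne, ?_, ?_⟩, ind_suppF c⟩
    · rw [← φv_apply]; exact LinearMap.mem_ker.mp hc
    · intro T hT hsum hss
      refine hmin (ind T) ?_ (ind_ne_zero hT) ?_
      · rw [LinearMap.mem_ker, φv_apply, suppF_ind]; exact hsum
      · rw [supp_eq_coe, supp_eq_coe, suppF_ind]
        exact_mod_cast (Finset.coe_ssubset).mpr hss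
  · rintro ⟨S, ⟨hS, hsum, hmin⟩, rfl⟩
    refine ⟨?_, ind_ne_zero hS, ?_⟩
    · rw [LinearMap.mem_ker, φv_apply, suppF_ind]; exact hsum
    · intro c' hc' hne' hss
      refine hmin (suppF c') (suppF_nonempty hne') ?_ ?_
      · rw [← φv_apply]; exact LinearMap.mem_ker.mp hc'
      · rw [supp_eq_coe, supp_eq_coe, suppF_ind] at hss
        exact_mod_cast (Finset.coe_ssubset).mp hss

set_option synthInstance.maxSize 2000 in
set_option maxHeartbeats 1000000 in
lemma W_perm : ∀ x y z : W, x ≠ 0 → y ≠ 0 → z ≠ 0 → x ≠ y → x ≠ z → y ≠ z →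
    (x=(1,0) ∧ y=(0,1) ∧ z=(1,1)) ∨ (x=(1,0) ∧ y=(1,1) ∧ z=(0,1)) ∨
    (x=(0,1) ∧ y=(1,0) ∧ z=(1,1)) ∨ (x=(0,1) ∧ y=(1,1) ∧ z=(1,0)) ∨
    (x=(1,1) ∧ y=(1,0) ∧ z=(0,1)) ∨ (x=(1,1) ∧ y=(0,1) ∧ z=(1,0)) := by decide

lemma good_iff {n : ℕ} (v : Fin n → W) (S : Finset (Fin n)) :
    Good v S ↔
      (∃ i, v i = 0 ∧ S = {i}) ∨
      (∃ i j, i ≠ j ∧ v i ≠ 0 ∧ v j = v i ∧ S = ({i, j} : Finset (Fin n))) ∨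
      (∃ i j l, v i = (1,0) ∧ v j = (0,1) ∧ v l = (1,1) ∧ S = ({i, j, l} : Finset (Fin n))) := by
  constructor
  · rintro ⟨hS, hsum, hmin⟩
    by_cases h0 : ∃ i ∈ S, v i = 0
    · obtain ⟨i, hiS, hvi⟩ := h0
      left
      refine ⟨i, hvi, ?_⟩
      have hsub : ({i} : Finset (Fin n)) ⊆ S := Finset.singleton_subset_iff.mpr hiS
      have hni := hmin {i} (Finset.singleton_nonempty i) (by rwa [Finset.sum_singleton])
      by_contra hne
      exact hni (Finset.ssubset_iff_subset_ne.mpr ⟨hsub, fun e => hne e.symm⟩)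
    · push_neg at h0
      by_cases h2 : ∃ i ∈ S, ∃ j ∈ S, i ≠ j ∧ v j = v i
      · obtain ⟨i, hiS, j, hjS, hij, hvij⟩ := h2
        right; left
        refine ⟨i, j, hij, h0 i hiS, hvij, ?_⟩
        have hsub : ({i, j} : Finset (Fin n)) ⊆ S := by
          intro x hx; simp at hx; rcases hx with rfl | rfl <;> assumption
        have hni := hmin {i, j} ⟨i, by simp⟩
          (by rw [Finset.sum_pair hij, hvij]; exact W_add_self _)
        by_contra hne
        exact hni (Finset.ssubset_iff_subset_ne.mpr ⟨hsub, fun e => hne e.symm⟩)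
      · push_neg at h2
        have hinj : Set.InjOn v S := by
          intro a ha b hb hab
          by_contra hne
          exact h2 a (Finset.mem_coe.mp ha) b (Finset.mem_coe.mp hb) hne hab.symm
        have hcard : S.card ≤ 3 := by
          have := Finset.card_le_card_of_injOn (f := v) (t := ({(1,0),(0,1),(1,1)} : Finset W))
            (fun i hi => by
              rcases W_cases (v i) with h | h | h | h
              · exact absurd h (h0 i hi)
              all_goals simp [h])
            hinj
          simpa using this
        have hcard1 : 1 ≤ S.card := Finset.card_pos.mpr hS
        interval_cases h : S.card
        · obtain ⟨i, rfl⟩ := Finset.card_eq_one.mp h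
          rw [Finset.sum_singleton] at hsum
          exact absurd hsum (h0 i (by simp))
        · obtain ⟨i, j, hij, rfl⟩ := Finset.card_eq_two.mp h
          rw [Finset.sum_pair hij] at hsum
          exact absurd hsum (W_add_ne_zero _ _
            (fun e => (h2 j (by simp) i (by simp) hij.symm e).elim))
        · obtain ⟨i, j, l, hij, hil, hjl, rfl⟩ := Finset.card_eq_three.mp h
          right; right
          have hi0 := h0 i (by simp)
          have hj0 := h0 j (by simp)
          have hl0 := h0 l (by simp)
          have hvij : v i ≠ v j := fun e => (h2 j (by simp) i (by simp) hij.symm e).elim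
          have hvil : v i ≠ v l := fun e => (h2 l (by simp) i (by simp) hil.symm e).elim
          have hvjl : v j ≠ v l := fun e => (h2 l (by simp) j (by simp) hjl.symm e).elim
          rcases W_perm (v i) (v j) (v l) hi0 hj0 hl0 hvij hvil hvjl with
            ⟨a,b,c⟩|⟨a,b,c⟩|⟨a,b,c⟩|⟨a,b,c⟩|⟨a,b,c⟩|⟨a,b,c⟩
          · exact ⟨i, j, l, a, b, c, rfl⟩
          · exact ⟨i, l, j, a, c, b, by ext x; simp; tauto⟩
          · exact ⟨j, i, l, b, a, c, by ext x; simp; tauto⟩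
          · exact ⟨l, i, j, c, a, b, by ext x; simp; tauto⟩
          · exact ⟨j, l, i, b, c, a, by ext x; simp; tauto⟩
          · exact ⟨l, j, i, c, b, a, by ext x; simp; tauto⟩
  · rintro (⟨i, hvi, rfl⟩ | ⟨i, j, hij, hvi0, hvji, rfl⟩ | ⟨i, j, l, h1, h2, h3, rfl⟩)
    · refine ⟨Finset.singleton_nonempty i, by rwa [Finset.sum_singleton], ?_⟩
      intro T hT _ hss
      rw [Finset.ssubset_singleton_iff.mp hss] at hT
      exact Finset.not_nonempty_empty hT
    · refine ⟨⟨i, by simp⟩, by rw [Finset.sum_pair hij, hvji]; exact W_add_self _, ?_⟩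
      intro T hT hsum0 hss
      rcases ssubset_pair hss hT with rfl | rfl
      · rw [Finset.sum_singleton] at hsum0; exact hvi0 hsum0
      · rw [Finset.sum_singleton, hvji] at hsum0; exact hvi0 hsum0
    · have hij : i ≠ j := fun e => by rw [e, h2] at h1; exact absurd h1 (by decide)
      have hil : i ≠ l := fun e => by rw [e, h3] at h1; exact absurd h1 (by decide)
      have hjl : j ≠ l := fun e => by rw [e, h3] at h2; exact absurd h2 (by decide)
      have hsum3 : (∑ x ∈ ({i, j, l} : Finset (Fin n)), v x) = 0 := by
        rw [show ({i, j, l} : Finset (Fin n)) = insert i {j, l} from rfl,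
          Finset.sum_insert (by simp [hij, hil]), Finset.sum_pair hjl, h1, h2, h3]
        decide
      refine ⟨⟨i, by simp⟩, hsum3, ?_⟩
      intro T hT hsum0 hss
      rcases ssubset_triple hss hT with rfl | rfl | rfl | rfl | rfl | rfl
      · rw [Finset.sum_singleton, h1] at hsum0; exact absurd hsum0 (by decide)
      · rw [Finset.sum_singleton, h2] at hsum0; exact absurd hsum0 (by decide)
      · rw [Finset.sum_singleton, h3] at hsum0; exact absurd hsum0 (by decide)
      · rw [Finset.sum_pair hij, h1, h2] at hsum0; exact absurd hsum0 (by decide)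
      · rw [Finset.sum_pair hil, h1, h3] at hsum0; exact absurd hsum0 (by decide)
      · rw [Finset.sum_pair hjl, h2, h3] at hsum0; exact absurd hsum0 (by decide)
def fib {n : ℕ} (v : Fin n → W) (τ : W) : Finset (Fin n) := univ.filter (fun i => v i = τ)

noncomputable def goodF {n : ℕ} (v : Fin n → W) : Finset (Finset (Fin n)) :=
  @Finset.filter _ (Good v) (Classical.decPred _) univ

def G1 {n : ℕ} (v : Fin n → W) : Finset (Finset (Fin n)) := (fib v 0).image (fun i => {i})
def G2 {n : ℕ} (v : Fin n → W) (τ : W) : Finset (Finset (Fin n)) := (fib v τ).powersetCard 2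
def G3 {n : ℕ} (v : Fin n → W) : Finset (Finset (Fin n)) :=
  (((fib v (1,0)) ×ˢ (fib v (0,1))) ×ˢ (fib v (1,1))).image (fun p => {p.1.1, p.1.2, p.2})

lemma mem_fib {n : ℕ} {v : Fin n → W} {τ : W} {i : Fin n} : i ∈ fib v τ ↔ v i = τ := by
  simp [fib]

lemma mem_G1 {n : ℕ} {v : Fin n → W} {S : Finset (Fin n)} :
    S ∈ G1 v ↔ ∃ i, v i = 0 ∧ S = {i} := by
  simp only [G1, Finset.mem_image, mem_fib]
  constructor
  · rintro ⟨i, h, rfl⟩; exact ⟨i, h, rfl⟩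
  · rintro ⟨i, h, rfl⟩; exact ⟨i, h, rfl⟩

lemma mem_G2 {n : ℕ} {v : Fin n → W} {τ : W} {S : Finset (Fin n)} :
    S ∈ G2 v τ ↔ ∃ i j, i ≠ j ∧ v i = τ ∧ v j = τ ∧ S = {i, j} := by
  simp only [G2, Finset.mem_powersetCard]
  constructor
  · rintro ⟨hsub, hcard⟩
    obtain ⟨i, j, hij, rfl⟩ := Finset.card_eq_two.mp hcard
    exact ⟨i, j, hij, mem_fib.mp (hsub (by simp)), mem_fib.mp (hsub (by simp)), rfl⟩
  · rintro ⟨i, j, hij, hi, hj, rfl⟩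
    refine ⟨?_, Finset.card_pair hij⟩
    intro x hx; simp at hx; rcases hx with rfl | rfl <;> simp [mem_fib, hi, hj]

lemma mem_G3 {n : ℕ} {v : Fin n → W} {S : Finset (Fin n)} :
    S ∈ G3 v ↔ ∃ i j l, v i = (1,0) ∧ v j = (0,1) ∧ v l = (1,1) ∧ S = {i, j, l} := by
  simp only [G3, Finset.mem_image, Finset.mem_product]
  constructor
  · rintro ⟨⟨⟨i, j⟩, l⟩, ⟨⟨hi, hj⟩, hl⟩, rfl⟩
    exact ⟨i, j, l, mem_fib.mp hi, mem_fib.mp hj, mem_fib.mp hl, rfl⟩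
  · rintro ⟨i, j, l, hi, hj, hl, rfl⟩
    exact ⟨⟨⟨i, j⟩, l⟩, ⟨⟨mem_fib.mpr hi, mem_fib.mpr hj⟩, mem_fib.mpr hl⟩, rfl⟩

lemma goodF_eq {n : ℕ} (v : Fin n → W) :
    goodF v = (G1 v ∪ G2 v (1,0) ∪ G2 v (0,1) ∪ G2 v (1,1)) ∪ G3 v := by
  classical
  ext S
  rw [goodF, Finset.mem_filter]
  simp only [Finset.mem_univ, true_and]
  rw [good_iff]
  simp only [Finset.mem_union]
  constructor
  · rintro (h | ⟨i, j, hij, hvi0, hvji, rfl⟩ | h)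
    · exact Or.inl (Or.inl (Or.inl (Or.inl (mem_G1.mpr h))))
    · rcases W_cases (v i) with h0 | h0 | h0 | h0
      · exact absurd h0 hvi0
      · exact Or.inl (Or.inl (Or.inl (Or.inr (mem_G2.mpr ⟨i, j, hij, h0, hvji.trans h0, rfl⟩))))
      · exact Or.inl (Or.inl (Or.inr (mem_G2.mpr ⟨i, j, hij, h0, hvji.trans h0, rfl⟩)))
      · exact Or.inl (Or.inr (mem_G2.mpr ⟨i, j, hij, h0, hvji.trans h0, rfl⟩))
    · exact Or.inr (mem_G3.mpr h)
  · rintro ((((h | h) | h) | h) | h)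
    · exact Or.inl (mem_G1.mp h)
    · obtain ⟨i, j, hij, hi, hj, rfl⟩ := mem_G2.mp h
      exact Or.inr (Or.inl ⟨i, j, hij, by rw [hi]; decide, hj.trans hi.symm, rfl⟩)
    · obtain ⟨i, j, hij, hi, hj, rfl⟩ := mem_G2.mp h
      exact Or.inr (Or.inl ⟨i, j, hij, by rw [hi]; decide, hj.trans hi.symm, rfl⟩)
    · obtain ⟨i, j, hij, hi, hj, rfl⟩ := mem_G2.mp h
      exact Or.inr (Or.inl ⟨i, j, hij, by rw [hi]; decide, hj.trans hi.symm, rfl⟩)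
    · exact Or.inr (Or.inr (mem_G3.mp h))

lemma card_G1 {n : ℕ} (v : Fin n → W) : (G1 v).card = (fib v 0).card :=
  Finset.card_image_of_injective _ Finset.singleton_injective

lemma card_G2 {n : ℕ} (v : Fin n → W) (τ : W) : (G2 v τ).card = (fib v τ).card.choose 2 :=
  Finset.card_powersetCard 2 _

lemma card_G3 {n : ℕ} (v : Fin n → W) :
    (G3 v).card = (fib v (1,0)).card * (fib v (0,1)).card * (fib v (1,1)).card := by
  rw [G3, Finset.card_image_of_injOn, Finset.card_product, Finset.card_product]
  rintro ⟨⟨i, j⟩, l⟩ hp ⟨⟨i', j'⟩, l'⟩ hq h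
  simp only [Finset.mem_product, Finset.mem_coe, mem_fib] at hp hq
  obtain ⟨⟨hi, hj⟩, hl⟩ := hp
  obtain ⟨⟨hi', hj'⟩, hl'⟩ := hq
  simp only at h
  have mem1 : i ∈ ({i', j', l'} : Finset (Fin n)) := h ▸ (by simp)
  have mem2 : j ∈ ({i', j', l'} : Finset (Fin n)) := h ▸ (by simp)
  have mem3 : l ∈ ({i', j', l'} : Finset (Fin n)) := h ▸ (by simp)
  have e1 : i = i' := by
    rcases Finset.mem_insert.mp mem1 with rfl | hm
    · rfl
    rcases Finset.mem_insert.mp hm with rfl | hm2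
    · rw [hi] at hj'; exact absurd hj' (by decide)
    · rw [Finset.mem_singleton.mp hm2, hl'] at hi; exact absurd hi (by decide)
  have e2 : j = j' := by
    rcases Finset.mem_insert.mp mem2 with rfl | hm
    · rw [hj] at hi'; exact absurd hi' (by decide)
    rcases Finset.mem_insert.mp hm with rfl | hm2
    · rfl
    · rw [Finset.mem_singleton.mp hm2, hl'] at hj; exact absurd hj (by decide)
  have e3 : l = l' := by
    rcases Finset.mem_insert.mp mem3 with rfl | hm
    · rw [hl] at hi'; exact absurd hi' (by decide)
    rcases Finset.mem_insert.mp hm with rfl | hm2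
    · rw [hl] at hj'; exact absurd hj' (by decide)
    · exact Finset.mem_singleton.mp hm2
  simp [e1, e2, e3]

lemma card_of_mem_G1 {n : ℕ} {v : Fin n → W} {S : Finset (Fin n)} (h : S ∈ G1 v) : S.card = 1 := by
  obtain ⟨i, _, rfl⟩ := mem_G1.mp h; simp

lemma card_of_mem_G2 {n : ℕ} {v : Fin n → W} {τ : W} {S : Finset (Fin n)} (h : S ∈ G2 v τ) :
    S.card = 2 := (Finset.mem_powersetCard.mp h).2

lemma card_of_mem_G3 {n : ℕ} {v : Fin n → W} {S : Finset (Fin n)} (h : S ∈ G3 v) : S.card = 3 := by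
  obtain ⟨i, j, l, hi, hj, hl, rfl⟩ := mem_G3.mp h
  have hij : i ≠ j := fun e => by rw [e, hj] at hi; exact absurd hi (by decide)
  have hil : i ≠ l := fun e => by rw [e, hl] at hi; exact absurd hi (by decide)
  have hjl : j ≠ l := fun e => by rw [e, hl] at hj; exact absurd hj (by decide)
  rw [Finset.card_insert_of_notMem (by simp [hij, hil]), Finset.card_pair hjl]

lemma disj_G2 {n : ℕ} {v : Fin n → W} {τ τ' : W} (h : τ ≠ τ') : Disjoint (G2 v τ) (G2 v τ') := by
  rw [Finset.disjoint_left]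
  intro S hS hS'
  obtain ⟨hsub, hcard⟩ := Finset.mem_powersetCard.mp hS
  obtain ⟨hsub', _⟩ := Finset.mem_powersetCard.mp hS'
  obtain ⟨x, hx⟩ : S.Nonempty := Finset.card_pos.mp (by omega)
  exact h ((mem_fib.mp (hsub hx)).symm.trans (mem_fib.mp (hsub' hx)))

lemma goodF_card {n : ℕ} (v : Fin n → W) :
    (goodF v).card = (fib v 0).card
      + ((fib v (1,0)).card.choose 2 + (fib v (0,1)).card.choose 2 + (fib v (1,1)).card.choose 2)
      + (fib v (1,0)).card * (fib v (0,1)).card * (fib v (1,1)).card := by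
  rw [goodF_eq v]
  have d1 : ∀ τ : W, Disjoint (G1 v) (G2 v τ) := by
    intro τ
    rw [Finset.disjoint_left]
    intro S h1 h2
    have := card_of_mem_G1 h1
    have := card_of_mem_G2 h2
    omega
  have dG3 : Disjoint (G1 v ∪ G2 v (1,0) ∪ G2 v (0,1) ∪ G2 v (1,1)) (G3 v) := by
    rw [Finset.disjoint_left]
    intro S h1 h3
    have h33 := card_of_mem_G3 h3
    rcases Finset.mem_union.mp h1 with h | h
    · rcases Finset.mem_union.mp h with h | h
      · rcases Finset.mem_union.mp h with h | h
        · have := card_of_mem_G1 h; omega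
        · have := card_of_mem_G2 h; omega
      · have := card_of_mem_G2 h; omega
    · have := card_of_mem_G2 h; omega
  rw [Finset.card_union_of_disjoint dG3]
  rw [Finset.card_union_of_disjoint (by
    refine Finset.disjoint_union_left.mpr ⟨Finset.disjoint_union_left.mpr ⟨d1 _, disj_G2 (by decide)⟩, disj_G2 (by decide)⟩)]
  rw [Finset.card_union_of_disjoint (Finset.disjoint_union_left.mpr ⟨d1 _, disj_G2 (by decide)⟩)]
  rw [Finset.card_union_of_disjoint (d1 _)]
  rw [card_G1, card_G2, card_G2, card_G2, card_G3]
  ring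

lemma mcode_ker {n : ℕ} (v : Fin n → W) :
    Mcode (LinearMap.ker (φv v)) = (goodF v).card := by
  classical
  rw [Mcode, minimal_eq_image]
  have : {S : Finset (Fin n) | Good v S} = ↑(goodF v) := by
    ext S
    rw [Set.mem_setOf_eq, Finset.mem_coe, goodF, Finset.mem_filter]
    simp
  rw [this, ← Finset.coe_image, Set.ncard_coe_finset]
  exact Finset.card_image_of_injective _ ind_inj

lemma fib_sum {n : ℕ} (v : Fin n → W) :
    (fib v 0).card + (fib v (1,0)).card + (fib v (0,1)).card + (fib v (1,1)).card = n := by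
  have h := Finset.card_eq_sum_card_fiberwise (s := (univ : Finset (Fin n)))
    (t := (univ : Finset W)) (f := v) (fun x _ => Finset.mem_univ _)
  have huniv : (univ : Finset W) = {(0,0), (1,0), (0,1), (1,1)} := by decide
  rw [huniv] at h
  rw [Finset.sum_insert (by decide), Finset.sum_insert (by decide),
    Finset.sum_insert (by decide), Finset.sum_singleton] at h
  simp only [Finset.card_univ, Fintype.card_fin] at h
  have e0 : fib v 0 = univ.filter (fun i => v i = ((0:ZMod 2),(0:ZMod 2))) := rfl
  rw [fib, fib, fib, fib]
  rw [show ((0:W)) = ((0:ZMod 2),(0:ZMod 2)) from rfl]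
  omega
lemma choose2_succ (n : ℕ) : (n+1).choose 2 = n.choose 2 + n := by
  rw [Nat.choose_succ_succ n 1, Nat.choose_one_right]
  exact Nat.add_comm n _

lemma choose2_add (a b : ℕ) : (a+b).choose 2 = a.choose 2 + b.choose 2 + a*b := by
  induction b with
  | zero => simp
  | succ m ih =>
    rw [show a + (m+1) = (a+m)+1 from rfl, choose2_succ, ih, choose2_succ]
    ring

lemma balanced_base (s a b c : ℕ) (hab : a ≤ b) (hbc : b ≤ c) (hsum : a + b + c = s)
    (hca : c ≤ a + 1) : a = s/3 ∧ b = (s+1)/3 ∧ c = (s+2)/3 := by omega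

lemma balanced_aux (s : ℕ) : ∀ N a b c : ℕ, a ≤ b → b ≤ c → a + b + c = s → c - a ≤ N →
    a*b*c ≤ (s/3)*((s+1)/3)*((s+2)/3) := by
  intro N
  induction N with
  | zero =>
    intro a b c hab hbc hsum hN
    obtain ⟨e1, e2, e3⟩ := balanced_base s a b c hab hbc hsum (by omega)
    rw [e1, e2, e3]
  | succ N ih =>
    intro a b c hab hbc hsum hN
    by_cases hca : c - a ≤ N
    · exact ih a b c hab hbc hsum hca
    by_cases hc1 : c ≤ a + 1
    · obtain ⟨e1, e2, e3⟩ := balanced_base s a b c hab hbc hsum hc1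
      rw [e1, e2, e3]
    push_neg at hc1
    obtain ⟨c', rfl⟩ : ∃ c', c = c' + 1 := ⟨c - 1, by omega⟩
    have hac' : a + 1 ≤ c' := by omega
    have hstep : a * b * (c'+1) ≤ (a+1) * b * c' := by
      have h1 : a * (c'+1) ≤ (a+1) * c' := by nlinarith
      calc a * b * (c'+1) = (a * (c'+1)) * b := by ring
        _ ≤ ((a+1) * c') * b := Nat.mul_le_mul_right b h1
        _ = (a+1) * b * c' := by ring
    refine le_trans hstep ?_
    by_cases hb1 : a + 1 ≤ b
    · by_cases hb2 : b ≤ c'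
      · exact ih (a+1) b c' hb1 hb2 (by omega) (by omega)
      · have hbe : b = c' + 1 := by omega
        rw [hbe]
        have := ih (a+1) c' (c'+1) (by omega) (by omega) (by omega) (by omega)
        calc (a+1) * (c'+1) * c' = (a+1) * c' * (c'+1) := by ring
          _ ≤ _ := this
    · have hbe : b = a := by omega
      rw [hbe]
      have := ih a (a+1) c' (by omega) (by omega) (by omega) (by omega)
      calc (a+1) * a * c' = a * (a+1) * c' := by ring
        _ ≤ _ := this

lemma prod3_le (a b c : ℕ) :
    a*b*c ≤ ((a+b+c)/3) * ((a+b+c+1)/3) * ((a+b+c+2)/3) := by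
  have key : ∀ x y z : ℕ, x ≤ y → y ≤ z → x + y + z = a + b + c → x*y*z ≤
      ((a+b+c)/3) * ((a+b+c+1)/3) * ((a+b+c+2)/3) :=
    fun x y z h1 h2 h3 => balanced_aux (a+b+c) (z-x) x y z h1 h2 h3 (le_refl _)
  rcases le_total a b with h1 | h1 <;> rcases le_total b c with h2 | h2 <;>
    rcases le_total a c with h3 | h3
  · exact key a b c h1 h2 (by omega)
  · exact key a b c h1 h2 (by omega)
  · calc a*b*c = a*c*b := by ring
      _ ≤ _ := key a c b h3 h2 (by omega)
  · calc a*b*c = c*a*b := by ring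
      _ ≤ _ := key c a b h3 h1 (by omega)
  · calc a*b*c = b*a*c := by ring
      _ ≤ _ := key b a c h1 h3 (by omega)
  · calc a*b*c = b*c*a := by ring
      _ ≤ _ := key b c a h2 (by omega) (by omega)
  · calc a*b*c = c*b*a := by ring
      _ ≤ _ := key c b a h2 h1 (by omega)
  · calc a*b*c = c*b*a := by ring
      _ ≤ _ := key c b a h2 h1 (by omega)

lemma id3 (c1 c2 c3 : ℕ) :
    (c1+1).choose 2 + (c2+1).choose 2 + (c3+1).choose 2 + (c1+1)*(c2+1)*(c3+1)
      = (c1+c2+c3+1) + (c1+c2+c3+1).choose 2 + c1*c2*c3 := by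
  rw [choose2_succ c1, choose2_succ c2, choose2_succ c3, choose2_succ (c1+c2+c3),
    show c1+c2+c3 = (c1+c2)+c3 from rfl, choose2_add (c1+c2) c3, choose2_add c1 c2]
  ring

lemma two_case (k b0 x y : ℕ) (hx : 1 ≤ x) (hy : 1 ≤ y) (hsum : b0 + x + y = k + 2) :
    b0 + (x.choose 2 + y.choose 2) ≤ k + k.choose 2 := by
  obtain ⟨x', rfl⟩ : ∃ x', x = x' + 1 := ⟨x - 1, by omega⟩
  have hmerge : (x'+1).choose 2 + y.choose 2 ≤ (x' + y).choose 2 := by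
    rw [choose2_succ, choose2_add]
    nlinarith
  have h2 : b0 + (x' + y).choose 2 ≤ (x' + y + b0).choose 2 := by
    conv_rhs => rw [choose2_add]
    nlinarith
  have he : x' + y + b0 = k + 1 := by omega
  rw [he, choose2_succ] at h2
  omega

lemma opt (k : ℕ) (hk : 1 ≤ k) (b0 b1 b2 b3 : ℕ) (hsum : b0+b1+b2+b3 = k+2)
    (hcon : (1 ≤ b1 ∧ 1 ≤ b2) ∨ (1 ≤ b1 ∧ 1 ≤ b3) ∨ (1 ≤ b2 ∧ 1 ≤ b3)) :
    b0 + (b1.choose 2 + b2.choose 2 + b3.choose 2) + b1*b2*b3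
      ≤ k + k.choose 2 + ((k-1)/3)*(k/3)*((k+1)/3) := by
  have hz : Nat.choose 0 2 = 0 := rfl
  by_cases h1 : b1 = 0
  · subst h1
    have hc : 1 ≤ b2 ∧ 1 ≤ b3 := by omega
    have ht := two_case k b0 b2 b3 hc.1 hc.2 (by omega)
    have hp : 0 * b2 * b3 = 0 := by ring
    omega
  by_cases h2 : b2 = 0
  · subst h2
    have hc : 1 ≤ b1 ∧ 1 ≤ b3 := by omega
    have ht := two_case k b0 b1 b3 hc.1 hc.2 (by omega)
    have hp : b1 * 0 * b3 = 0 := by ring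
    omega
  by_cases h3 : b3 = 0
  · subst h3
    have hc : 1 ≤ b1 ∧ 1 ≤ b2 := by omega
    have ht := two_case k b0 b1 b2 hc.1 hc.2 (by omega)
    have hp : b1 * b2 * 0 = 0 := by ring
    omega
  -- all positive
  have step1 : b0 + b1.choose 2 ≤ (b1+b0).choose 2 := by
    conv_rhs => rw [choose2_add]
    nlinarith [Nat.one_le_iff_ne_zero.mpr h1]
  have step2 : b1*b2*b3 ≤ (b1+b0)*b2*b3 := by
    have : b1 ≤ b1 + b0 := Nat.le_add_right _ _
    exact Nat.mul_le_mul_right b3 (Nat.mul_le_mul_right b2 this)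
  obtain ⟨c1, e1⟩ : ∃ c1, b1 + b0 = c1 + 1 := ⟨b1 + b0 - 1, by omega⟩
  obtain ⟨c2, e2⟩ : ∃ c2, b2 = c2 + 1 := ⟨b2 - 1, by omega⟩
  obtain ⟨c3, e3⟩ : ∃ c3, b3 = c3 + 1 := ⟨b3 - 1, by omega⟩
  have hcs : c1 + c2 + c3 + 1 = k := by omega
  have hmain : (b1+b0).choose 2 + b2.choose 2 + b3.choose 2 + (b1+b0)*b2*b3
      = k + k.choose 2 + c1*c2*c3 := by
    rw [e1, e2, e3, id3, hcs]
  have hprod : c1*c2*c3 ≤ ((k-1)/3)*(k/3)*((k+1)/3) := by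
    have hp := prod3_le c1 c2 c3
    have hv : c1 + c2 + c3 = k - 1 := by omega
    rw [hv, show k - 1 + 1 = k by omega, show k - 1 + 2 = k + 1 by omega] at hp
    exact hp
  omega
-- every w in W is a combination of (1,0),(0,1)
lemma W_span : ∀ w : W, w = w.1 • ((1:ZMod 2),(0:ZMod 2)) + w.2 • ((0:ZMod 2),(1:ZMod 2)) := by
  decide

lemma mcode_formula {n : ℕ} (v : Fin n → W) :
    Mcode (LinearMap.ker (φv v)) = (fib v 0).card
      + ((fib v (1,0)).card.choose 2 + (fib v (0,1)).card.choose 2 + (fib v (1,1)).card.choose 2)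
      + (fib v (1,0)).card * (fib v (0,1)).card * (fib v (1,1)).card := by
  rw [mcode_ker, goodF_card]

-- Upper bound
lemma upper_bound (k : ℕ) (hk : 0 < k) (C : Submodule (ZMod 2) (Fin (k+2) → ZMod 2))
    (hC : Module.finrank (ZMod 2) C = k) :
    Mcode C ≤ k + k.choose 2 + ((k-1)/3)*(k/3)*((k+1)/3) := by
  classical
  have hamb : Module.finrank (ZMod 2) (Fin (k+2) → ZMod 2) = k + 2 := by simp
  have hq : Module.finrank (ZMod 2) ((Fin (k+2) → ZMod 2) ⧸ C) = 2 := by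
    have h := Submodule.finrank_quotient_add_finrank C
    rw [hamb, hC] at h
    omega
  have hW : Module.finrank (ZMod 2) W = 2 := by simp
  obtain ⟨e⟩ := FiniteDimensional.nonempty_linearEquiv_of_finrank_eq (hq.trans hW.symm)
  set φ : (Fin (k+2) → ZMod 2) →ₗ[ZMod 2] W := e.toLinearMap ∘ₗ C.mkQ with hφ
  have hker : LinearMap.ker φ = C := by
    rw [hφ, LinearMap.ker_comp, LinearEquiv.ker, Submodule.comap_bot, Submodule.ker_mkQ]
  have hsurj : Function.Surjective φ := by
    intro w
    obtain ⟨q, hqe⟩ := e.surjective w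
    obtain ⟨x, hx⟩ := Submodule.mkQ_surjective C q
    exact ⟨x, by simp [hφ, hx, hqe]⟩
  -- express φ through a parity-check vector assignment v
  set v : Fin (k+2) → W := fun i => φ (fun j => if i = j then 1 else 0) with hv
  have hφv : ∀ x, φ x = φv v x := by
    intro x
    conv_lhs => rw [pi_eq_sum_univ x]
    rw [map_sum]
    show _ = ∑ i, x i • v i
    exact Finset.sum_congr rfl (fun i _ => by rw [map_smul])
  have hker2 : LinearMap.ker (φv v) = C := by
    rw [← hker]
    ext x
    simp only [LinearMap.mem_ker]
    rw [hφv]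
  have hMcode : Mcode C = Mcode (LinearMap.ker (φv v)) := by rw [hker2]
  -- fiber counts
  set b0 := (fib v 0).card
  set b1 := (fib v (1,0)).card
  set b2 := (fib v (0,1)).card
  set b3 := (fib v (1,1)).card
  have hbsum : b0 + b1 + b2 + b3 = k + 2 := fib_sum v
  -- two distinct nonzero values exist
  have hexists : ∃ i j, v i ≠ 0 ∧ v j ≠ 0 ∧ v i ≠ v j := by
    by_contra hcon
    push_neg at hcon
    by_cases hall : ∀ i, v i = 0
    · obtain ⟨x, hx⟩ := hsurj ((1,0) : W)
      rw [hφv, φv_apply] at hx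
      have : ∑ i ∈ suppF x, v i = 0 := Finset.sum_eq_zero (fun i _ => hall i)
      rw [this] at hx
      exact absurd hx.symm (by decide)
    · push_neg at hall
      obtain ⟨i0, hi0⟩ := hall
      have hmem : ∀ x, φ x ∈ Submodule.span (ZMod 2) ({v i0} : Set W) := by
        intro x
        rw [hφv, φv_apply]
        refine Submodule.sum_mem _ (fun i _ => ?_)
        by_cases hvi : v i = 0
        · rw [hvi]; exact Submodule.zero_mem _
        · rw [hcon i i0 hvi hi0]
          exact Submodule.subset_span rfl
      obtain ⟨x1, hx1⟩ := hsurj ((1,0) : W)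
      obtain ⟨x2, hx2⟩ := hsurj ((0,1) : W)
      have m1 := hmem x1
      have m2 := hmem x2
      rw [hx1] at m1
      rw [hx2] at m2
      rw [Submodule.mem_span_singleton] at m1 m2
      obtain ⟨a1, ha1⟩ := m1
      obtain ⟨a2, ha2⟩ := m2
      rcases zmod2_cases a1 with h | h
      · rw [h, zero_smul] at ha1; exact absurd ha1 (by decide)
      rcases zmod2_cases a2 with h2 | h2
      · rw [h2, zero_smul] at ha2; exact absurd ha2 (by decide)
      rw [h, one_smul] at ha1
      rw [h2, one_smul] at ha2
      exact absurd (ha1.symm.trans ha2) (by decide)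
  have hcon2 : (1 ≤ b1 ∧ 1 ≤ b2) ∨ (1 ≤ b1 ∧ 1 ≤ b3) ∨ (1 ≤ b2 ∧ 1 ≤ b3) := by
    obtain ⟨i, j, hi, hj, hij⟩ := hexists
    have hc : ∀ τ : W, v i = τ → 1 ≤ (fib v τ).card :=
      fun τ h => Finset.card_pos.mpr ⟨i, mem_fib.mpr h⟩
    have hc' : ∀ τ : W, v j = τ → 1 ≤ (fib v τ).card :=
      fun τ h => Finset.card_pos.mpr ⟨j, mem_fib.mpr h⟩
    rcases W_cases (v i) with h | h | h | h
    · exact absurd h hi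
    all_goals rcases W_cases (v j) with h' | h' | h' | h'
    all_goals first
      | exact absurd h' hj
      | (exact absurd (h.trans h'.symm) hij)
      | (refine Or.inl ⟨?_, ?_⟩ <;> [skip; skip] <;> first | exact hc _ h | exact hc' _ h')
      | (refine Or.inr (Or.inl ⟨?_, ?_⟩) <;> first | exact hc _ h | exact hc' _ h')
      | (refine Or.inr (Or.inr ⟨?_, ?_⟩) <;> first | exact hc _ h | exact hc' _ h')
  rw [hMcode, mcode_formula]
  exact opt k hk b0 b1 b2 b3 (by omega) hcon2
lemma card_filter_lt (n m : ℕ) (h : m ≤ n) :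
    (univ.filter (fun i : Fin n => (i:ℕ) < m)).card = m := by
  have : univ.filter (fun i : Fin n => (i:ℕ) < m)
      = (univ : Finset (Fin m)).map (Fin.castLEEmb h) := by
    ext i
    simp only [mem_filter, mem_univ, true_and]
    constructor
    · intro hi
      rw [Finset.mem_map]
      exact ⟨⟨(i:ℕ), hi⟩, Finset.mem_univ _, rfl⟩
    · intro hmem
      rw [Finset.mem_map] at hmem
      obtain ⟨j, -, rfl⟩ := hmem
      simp [Fin.castLEEmb]
  rw [this, Finset.card_map, Finset.card_univ, Fintype.card_fin]

def w3 (n b1 b2 : ℕ) : Fin n → W :=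
  fun i => if (i:ℕ) < b1 then (1,0) else if (i:ℕ) < b1 + b2 then (0,1) else (1,1)

lemma w3_fib0 (n b1 b2 : ℕ) : fib (w3 n b1 b2) 0 = ∅ := by
  ext i
  simp only [mem_fib, Finset.notMem_empty, iff_false, w3]
  split_ifs <;> decide

lemma w3_fib10 (n b1 b2 : ℕ) :
    fib (w3 n b1 b2) (1,0) = univ.filter (fun i : Fin n => (i:ℕ) < b1) := by
  ext i
  simp only [mem_fib, mem_filter, mem_univ, true_and, w3]
  split_ifs with h1 h2
  · simp [h1]
  · constructor
    · intro h; exact absurd h (by decide)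
    · intro h; exact absurd h h1
  · constructor
    · intro h; exact absurd h (by decide)
    · intro h; exact absurd h h1

lemma w3_fib01 (n b1 b2 : ℕ) :
    fib (w3 n b1 b2) (0,1)
      = univ.filter (fun i : Fin n => (i:ℕ) < b1 + b2) \ univ.filter (fun i : Fin n => (i:ℕ) < b1) := by
  ext i
  simp only [mem_fib, Finset.mem_sdiff, mem_filter, mem_univ, true_and, w3]
  split_ifs with h1 h2
  · constructor
    · intro h; exact absurd h (by decide)
    · intro h; omega
  · constructor
    · intro _; exact ⟨h2, h1⟩
    · intro _; rfl
  · constructor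
    · intro h; exact absurd h (by decide)
    · intro h; omega
lemma w3_fib11 (n b1 b2 : ℕ) :
    fib (w3 n b1 b2) (1,1)
      = univ \ univ.filter (fun i : Fin n => (i:ℕ) < b1 + b2) := by
  ext i
  simp only [mem_fib, Finset.mem_sdiff, mem_filter, mem_univ, true_and, w3]
  split_ifs with h1 h2
  · constructor
    · intro h; exact absurd h (by decide)
    · intro h; omega
  · constructor
    · intro h; exact absurd h (by decide)
    · intro h; exact absurd h2 h
  · constructor
    · intro _; omega
    · intro _; rfl

lemma w3_cards (n b1 b2 : ℕ) (h : b1 + b2 ≤ n) :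
    (fib (w3 n b1 b2) 0).card = 0 ∧
    (fib (w3 n b1 b2) (1,0)).card = b1 ∧
    (fib (w3 n b1 b2) (0,1)).card = b2 ∧
    (fib (w3 n b1 b2) (1,1)).card = n - (b1 + b2) := by
  refine ⟨by rw [w3_fib0]; simp, by rw [w3_fib10]; exact card_filter_lt n b1 (by omega), ?_, ?_⟩
  · rw [w3_fib01, Finset.card_sdiff_of_subset (by
      intro i hi
      simp only [mem_filter, mem_univ, true_and] at *
      omega)]
    rw [card_filter_lt n (b1+b2) h, card_filter_lt n b1 (by omega)]
    omega
  · rw [w3_fib11, Finset.card_sdiff_of_subset (Finset.filter_subset _ _)]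
    rw [card_filter_lt n (b1+b2) h, Finset.card_univ, Fintype.card_fin]

lemma w3_exists_val (n b1 b2 : ℕ) (τ : W) (hτ : (fib (w3 n b1 b2) τ).card ≠ 0) :
    τ ∈ Set.range (w3 n b1 b2) := by
  obtain ⟨i, hi⟩ := Finset.card_pos.mp (Nat.pos_of_ne_zero hτ)
  exact ⟨i, mem_fib.mp hi⟩

lemma range_top {n : ℕ} (v : Fin n → W) (h10 : ∃ i, v i = (1,0)) (h01 : ∃ j, v j = (0,1)) :
    LinearMap.range (φv v) = ⊤ := by
  have hval : ∀ i : Fin n, v i ∈ LinearMap.range (φv v) := by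
    intro i
    refine ⟨ind {i}, ?_⟩
    rw [φv_apply, suppF_ind, Finset.sum_singleton]
  rw [eq_top_iff]
  intro w _
  obtain ⟨i, hi⟩ := h10
  obtain ⟨j, hj⟩ := h01
  rw [W_span w]
  exact Submodule.add_mem _ (Submodule.smul_mem _ _ (hi ▸ hval i))
    (Submodule.smul_mem _ _ (hj ▸ hval j))

lemma construction (k : ℕ) (hk : 0 < k) :
    ∃ C : Submodule (ZMod 2) (Fin (k+2) → ZMod 2),
      Module.finrank (ZMod 2) C = k ∧
      Mcode C = k + k.choose 2 + ((k-1)/3)*(k/3)*((k+1)/3) := by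
  set c1 := (k-1)/3 with hc1
  set c2 := k/3 with hc2
  set c3 := (k+1)/3 with hc3
  have hcsum : c1 + c2 + c3 = k - 1 := by omega
  have hb : (c1+1) + (c2+1) ≤ k + 2 := by omega
  obtain ⟨h0, h10, h01, h11⟩ := w3_cards (k+2) (c1+1) (c2+1) hb
  have h11' : (fib (w3 (k+2) (c1+1) (c2+1)) (1,1)).card = c3 + 1 := by rw [h11]; omega
  refine ⟨LinearMap.ker (φv (w3 (k+2) (c1+1) (c2+1))), ?_, ?_⟩
  · have hrange : LinearMap.range (φv (w3 (k+2) (c1+1) (c2+1))) = ⊤ := by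
      refine range_top _ ?_ ?_
      · exact w3_exists_val (k+2) (c1+1) (c2+1) (1,0) (by rw [h10]; omega)
      · exact w3_exists_val (k+2) (c1+1) (c2+1) (0,1) (by rw [h01]; omega)
    have hrn := LinearMap.finrank_range_add_finrank_ker (φv (w3 (k+2) (c1+1) (c2+1)))
    rw [hrange] at hrn
    have htop : Module.finrank (ZMod 2) (⊤ : Submodule (ZMod 2) W) = 2 := by
      rw [finrank_top]; simp
    have hamb : Module.finrank (ZMod 2) (Fin (k+2) → ZMod 2) = k + 2 := by simp
    rw [htop, hamb] at hrn
    omega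
  · rw [mcode_formula, h0, h10, h01, h11']
    have := id3 c1 c2 c3
    have hid : c1 + c2 + c3 + 1 = k := by omega
    rw [hid] at this
    omega


theorem stmt18 (k : ℕ) (hk : 0 < k) :
    M2 (k + 2) k = k + k * (k - 1) / 2 + ((k - 1) / 3) * (k / 3) * ((k + 1) / 3) := by
  obtain ⟨C, hr, hm⟩ := construction k hk
  have htarget : k + k * (k - 1) / 2 + ((k - 1) / 3) * (k / 3) * ((k + 1) / 3)
      = k + k.choose 2 + ((k-1)/3)*(k/3)*((k+1)/3) := by
    rw [Nat.choose_two_right]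
  rw [htarget, M2]
  apply le_antisymm
  · refine csSup_le ?_ ?_
    · exact ⟨k + k.choose 2 + ((k-1)/3)*(k/3)*((k+1)/3), C, hr, hm⟩
    · rintro m ⟨C', h1, h2⟩
      rw [← h2]
      exact upper_bound k hk C' h1
  · apply le_csSup
    · refine ⟨k + k.choose 2 + ((k-1)/3)*(k/3)*((k+1)/3), ?_⟩
      rintro m ⟨C', h1, h2⟩
      rw [← h2]
      exact upper_bound k hk C' h1
    · exact ⟨C, hr, hm⟩
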